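/- Elementary power-difference inequality: for every q̄ ∈ (1,2] and all a, b > 0, (a−b)² ((a+b)/2)^{q̄−2} ≤ (a−b)(a^{q̄−1} − b^{q̄−1})/(q̄−1). -/

import Mathlib

open Real intervalIntegral in
private lemma bern_neg {s r : ℝ} (hs : -1 < s) (hr1 : -1 ≤ r) (hr2 : r ≤ 0) :
    1 + r * s ≤ (1 + s) ^ r := by
  have hs1 : (0:ℝ) < 1 + s := by linarith
  rcases le_or_gt (1 + r * s) 0 with h | h
  · exact h.trans (Real.rpow_pos_of_pos hs1 r).le
  · set p := -r with hp
    have hp1 : 0 ≤ p := by simp [hp]; linarith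
    have hp2 : p ≤ 1 := by simp [hp]; linarith
    have hB : (1 + s) ^ p ≤ 1 + p * s :=
      rpow_one_add_le_one_add_mul_self hs.le hp1 hp2
    have hps : 0 < 1 - p * s := by simp [hp] at h ⊢; linarith
    have key : (1 - p * s) * (1 + s) ^ p ≤ 1 := by
      calc (1 - p * s) * (1 + s) ^ p ≤ (1 - p * s) * (1 + p * s) := by
            exact mul_le_mul_of_nonneg_left hB hps.le
        _ = 1 - (p * s) ^ 2 := by ring
        _ ≤ 1 := by nlinarith [sq_nonneg (p * s)]
    have hpow : (0:ℝ) < (1 + s) ^ p := Real.rpow_pos_of_pos hs1 p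
    have : 1 - p * s ≤ ((1 + s) ^ p)⁻¹ := by
      calc 1 - p * s = (1 - p * s) * (1 + s) ^ p * ((1 + s) ^ p)⁻¹ := by field_simp
        _ ≤ 1 * ((1 + s) ^ p)⁻¹ := mul_le_mul_of_nonneg_right key (inv_nonneg.mpr hpow.le)
        _ = ((1 + s) ^ p)⁻¹ := one_mul _
    rw [show r = -p by simp [hp], Real.rpow_neg hs1.le]
    calc 1 + -p * s = 1 - p * s := by ring
      _ ≤ ((1 + s) ^ p)⁻¹ := this

open Real intervalIntegral in
private lemma key_ineq {q a b : ℝ} (hq1 : 1 < q) (hq2 : q ≤ 2) (hb : 0 < b) (hab : b ≤ a) :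
    (a - b) * ((a + b)/2) ^ (q - 2) ≤ (a ^ (q - 1) - b ^ (q - 1)) / (q - 1) := by
  set r := q - 2 with hr
  set m := (a + b) / 2 with hm
  have ha : 0 < a := lt_of_lt_of_le hb hab
  have hm0 : 0 < m := by simp [hm]; linarith
  have hr1 : -1 < r := by simp [hr]; linarith
  have hr2 : r ≤ 0 := by simp [hr]; linarith
  -- pointwise tangent-line inequality
  have hpt : ∀ x ∈ Set.Icc b a, m ^ r + r * m ^ (r - 1) * (x - m) ≤ x ^ r := by
    intro x hx
    have hx0 : 0 < x := lt_of_lt_of_le hb hx.1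
    have hs : -1 < x / m - 1 := by
      have : 0 < x / m := div_pos hx0 hm0
      linarith
    have hB : 1 + r * (x / m - 1) ≤ (1 + (x / m - 1)) ^ r :=
      bern_neg hs hr1.le hr2
    have h1 : (1 + (x / m - 1)) = x / m := by ring
    rw [h1, Real.div_rpow hx0.le hm0.le] at hB
    have hmr : 0 < m ^ r := Real.rpow_pos_of_pos hm0 r
    have hB2 : m ^ r * (1 + r * (x / m - 1)) ≤ x ^ r := by
      rw [le_div_iff₀ hmr] at hB
      calc m ^ r * (1 + r * (x / m - 1)) = (1 + r * (x / m - 1)) * m ^ r := by ring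
        _ ≤ x ^ r := hB
    calc m ^ r + r * m ^ (r - 1) * (x - m)
        = m ^ r * (1 + r * (m ^ (r-1) * m / m ^ r) * (x / m - 1)) := by
          field_simp
      _ = m ^ r * (1 + r * (x / m - 1)) := by
          rw [show m ^ (r-1) * m = m ^ r by
            rw [← Real.rpow_add_one hm0.ne' (r-1)]; ring_nf]
          rw [div_self hmr.ne']
          ring_nf
      _ ≤ x ^ r := hB2
  -- integrability
  have hint1 : IntervalIntegrable (fun x : ℝ => x ^ r) MeasureTheory.volume b a :=
    intervalIntegral.intervalIntegrable_rpow' hr1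
  have hint2 : IntervalIntegrable (fun x : ℝ => m ^ r + r * m ^ (r - 1) * (x - m))
      MeasureTheory.volume b a := by
    apply Continuous.intervalIntegrable; continuity
  -- integral comparison
  have hmono := intervalIntegral.integral_mono_on hab hint2 hint1 hpt
  have hL : ∫ x in b..a, (m ^ r + r * m ^ (r - 1) * (x - m)) = (a - b) * m ^ r := by
    rw [intervalIntegral.integral_add (by apply Continuous.intervalIntegrable; continuity)
      (by apply Continuous.intervalIntegrable; continuity)]
    rw [intervalIntegral.integral_const]
    have : ∫ x in b..a, r * m ^ (r - 1) * (x - m)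
        = r * m ^ (r - 1) * ∫ x in b..a, (x - m) := by
      rw [← intervalIntegral.integral_const_mul]
    rw [this]
    rw [intervalIntegral.integral_sub (by apply Continuous.intervalIntegrable; continuity)
      (by apply Continuous.intervalIntegrable; continuity)]
    rw [integral_id, intervalIntegral.integral_const]
    have hz : (a ^ 2 - b ^ 2) / 2 - (a - b) • m = 0 := by
      simp [hm, smul_eq_mul]; ring
    rw [hz, mul_zero, add_zero, smul_eq_mul, mul_comm]
  have hR : ∫ x in b..a, x ^ r = (a ^ (q - 1) - b ^ (q - 1)) / (q - 1) := by
    rw [integral_rpow (Or.inl hr1)]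
    have : r + 1 = q - 1 := by simp [hr]; ring
    rw [this]
  rw [hL, hR] at hmono
  exact hmono

/-- **Elementary power-difference inequality.**
For `q̄ ∈ (1,2]` and positive reals `a, b`,
`(a−b)² ((a+b)/2)^{q̄−2} ≤ (a−b)(a^{q̄−1} − b^{q̄−1})/(q̄−1).` -/
theorem pow_difference_inequality (qb a b : ℝ) (hqb1 : 1 < qb) (hqb2 : qb ≤ 2)
    (ha : 0 < a) (hb : 0 < b) :
    (a - b)^2 * ((a + b)/2) ^ (qb - 2) ≤
      (a - b) * (a ^ (qb - 1) - b ^ (qb - 1)) / (qb - 1) := by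
  rcases le_total b a with hab | hab
  · have h := key_ineq hqb1 hqb2 hb hab
    have hab' : 0 ≤ a - b := by linarith
    have := mul_le_mul_of_nonneg_left h hab'
    calc (a - b)^2 * ((a + b)/2) ^ (qb - 2)
        = (a - b) * ((a - b) * ((a + b)/2) ^ (qb - 2)) := by ring
      _ ≤ (a - b) * ((a ^ (qb - 1) - b ^ (qb - 1)) / (qb - 1)) := this
      _ = (a - b) * (a ^ (qb - 1) - b ^ (qb - 1)) / (qb - 1) := by ring
  · have h := key_ineq hqb1 hqb2 ha hab
    have hab' : 0 ≤ b - a := by linarith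
    have := mul_le_mul_of_nonneg_left h hab'
    calc (a - b)^2 * ((a + b)/2) ^ (qb - 2)
        = (b - a) * ((b - a) * ((b + a)/2) ^ (qb - 2)) := by ring_nf
      _ ≤ (b - a) * ((b ^ (qb - 1) - a ^ (qb - 1)) / (qb - 1)) := this
      _ = (a - b) * (a ^ (qb - 1) - b ^ (qb - 1)) / (qb - 1) := by ring
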